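/- For a < b and 1/2 < α < 1, for each fixed x ∈ (a,b) the function t ↦ G(x,t) is strictly increasing on (a, x); consequently sup_{a < t < x} G(x,t) = G(x,x) > 0 for every x ∈ (a,b). -/

import Mathlib

open Real MeasureTheory Set intervalIntegral Filter Topology

/-- Kernel `K(x,t) = (1/Γ(α)²) ∫_{max{x,t}}^{b} (s-x)^{α-1}(s-t)^{α-1} ds`. -/
noncomputable def K (b α x t : ℝ) : ℝ :=
  (1 / Real.Gamma α ^ 2) * ∫ s in max x t..b, (s - x) ^ (α - 1) * (s - t) ^ (α - 1)

/-- Green's function `G(x,t) = K(x,t) - K(a,t)K(x,a)/K(a,a)`. -/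
noncomputable def G (a b α x t : ℝ) : ℝ :=
  K b α x t - K b α a t * K b α x a / K b α a a

namespace GAux

/-- Integrability of a shifted power. -/
lemma rpow_shift_intble (c : ℝ) {r : ℝ} (hr : -1 < r) (u v : ℝ) :
    IntervalIntegrable (fun s => (s - c) ^ r) volume u v := by
  have h := (intervalIntegral.intervalIntegrable_rpow' (a := u - c) (b := v - c) hr).comp_sub_right c
  simpa using h

lemma contOn_rpow_shift {c u v : ℝ} (h : c < u) (huv : u ≤ v) (r : ℝ) :
    ContinuousOn (fun s => (s - c) ^ r) (Set.uIcc u v) := by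
  intro s hs
  rw [Set.uIcc_of_le huv] at hs
  have hsc : s - c ≠ 0 := sub_ne_zero.mpr (ne_of_gt (lt_of_lt_of_le h hs.1))
  exact ((continuousAt_id.sub continuousAt_const).rpow_const (Or.inl hsc)).continuousWithinAt

/-- Integrability of the product of two shifted powers with singularities at or
below the left endpoint. -/
lemma prod_intble {c₁ c₂ u v : ℝ} (h1 : c₁ ≤ u) (h2 : c₂ ≤ u) (huv : u ≤ v)
    {r : ℝ} (hr2 : -1 < 2 * r) :
    IntervalIntegrable (fun s => (s - c₁) ^ r * (s - c₂) ^ r) volume u v := by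
  have hr : -1 < r := by nlinarith
  rcases lt_or_eq_of_le h1 with h1' | h1e
  · exact (rpow_shift_intble c₂ hr u v).continuousOn_mul (contOn_rpow_shift h1' huv r)
  · rcases lt_or_eq_of_le h2 with h2' | h2e
    · exact (rpow_shift_intble c₁ hr u v).mul_continuousOn (contOn_rpow_shift h2' huv r)
    · -- diagonal case : both singularities at the left endpoint
      rw [h1e, h2e]
      have hbase : IntervalIntegrable (fun s => (s - u) ^ (2 * r)) volume u v :=
        rpow_shift_intble u hr2 u v
      rw [intervalIntegrable_iff_integrableOn_Ioc_of_le huv] at hbase ⊢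
      refine hbase.congr_fun (fun s hs => ?_) measurableSet_Ioc
      have hpos : (0:ℝ) < s - u := sub_pos.mpr hs.1
      simp only [two_mul, Real.rpow_add hpos]

/-- Comparison of two product integrals (strict): the integrand with the larger
second-shift is pointwise larger, since the exponent is negative. -/
lemma integral_lt {c u v : ℝ} {t₁ t₂ : ℝ} (hc : c ≤ u) (h1 : t₁ < t₂) (h2 : t₂ ≤ u)
    (huv : u < v) {r : ℝ} (hr2 : -1 < 2 * r) (hr0 : r < 0) :
    ∫ s in u..v, (s - c) ^ r * (s - t₁) ^ r < ∫ s in u..v, (s - c) ^ r * (s - t₂) ^ r := by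
  have hi1 : IntervalIntegrable (fun s => (s - c) ^ r * (s - t₁) ^ r) volume u v :=
    prod_intble hc (h1.le.trans h2) huv.le hr2
  have hi2 : IntervalIntegrable (fun s => (s - c) ^ r * (s - t₂) ^ r) volume u v :=
    prod_intble hc h2 huv.le hr2
  have hdiff : (0:ℝ) < ∫ s in u..v,
      ((s - c) ^ r * (s - t₂) ^ r - (s - c) ^ r * (s - t₁) ^ r) := by
    refine intervalIntegral_pos_of_pos_on (hi2.sub hi1) (fun s hs => ?_) huv
    have hsc : (0:ℝ) < s - c := by have := hs.1; linarith [hc.trans_lt hs.1]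
    have h2s : (0:ℝ) < s - t₂ := by linarith [hs.1, h2]
    have hlt : (s - t₁) ^ r < (s - t₂) ^ r :=
      Real.rpow_lt_rpow_of_neg h2s (by linarith) hr0
    have hscr : (0:ℝ) < (s - c) ^ r := Real.rpow_pos_of_pos hsc r
    nlinarith
  have := intervalIntegral.integral_sub hi2 hi1
  linarith [this ▸ hdiff]

end GAux

open GAux

/-- for fixed x ∈ (a,b), t ↦ G(x,t) is strictly increasing on (a,x),
and sup over a<t<x of G(x,t) equals G(x,x) > 0. -/
theorem G_sup_diag (a b α : ℝ) (hab : a < b) (hα₁ : 1 / 2 < α) (hα₂ : α < 1)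
    (x : ℝ) (hx : x ∈ Set.Ioo a b) :
    StrictMonoOn (fun t => G a b α x t) (Set.Ioo a x) ∧
      sSup ((fun t => G a b α x t) '' Set.Ioo a x) = G a b α x x ∧
      0 < G a b α x x := by
  obtain ⟨hax, hxb⟩ := hx
  have hp0 : α - 1 < 0 := by linarith
  have hp1 : (-1:ℝ) < α - 1 := by linarith
  have hp2 : (-1:ℝ) < 2 * (α - 1) := by linarith
  have hc : (0:ℝ) < 1 / Real.Gamma α ^ 2 := by
    have := Real.Gamma_pos_of_pos (by linarith : (0:ℝ) < α)
    positivity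
  -- basic positivity facts
  have hKaa : 0 < K b α a a := by
    rw [K, max_self]
    refine mul_pos hc ?_
    refine intervalIntegral_pos_of_pos_on (prod_intble le_rfl le_rfl hab.le hp2)
      (fun s hs => ?_) hab
    have : (0:ℝ) < s - a := sub_pos.mpr hs.1
    exact mul_pos (Real.rpow_pos_of_pos this _) (Real.rpow_pos_of_pos this _)
  have hKxa : 0 ≤ K b α x a := by
    rw [K, max_eq_left (by linarith : a ≤ x)]
    refine mul_nonneg hc.le (intervalIntegral.integral_nonneg hxb.le (fun s hs => ?_))
    exact mul_nonneg (Real.rpow_nonneg (by linarith [hs.1]) _)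
      (Real.rpow_nonneg (by linarith [hs.1]) _)
  -- the main monotonicity estimate
  have hmono : ∀ t₁ t₂, a ≤ t₁ → t₁ < t₂ → t₂ ≤ x → G a b α x t₁ < G a b α x t₂ := by
    intro t₁ t₂ ha1 h12 h2x
    have h1x : t₁ < x := lt_of_lt_of_le h12 h2x
    have hKx : K b α x t₁ < K b α x t₂ := by
      rw [K, K, max_eq_left h1x.le, max_eq_left h2x]
      exact mul_lt_mul_of_pos_left
        (integral_lt le_rfl h12 h2x hxb hp2 hp0) hc
    have hKa : K b α a t₂ ≤ K b α a t₁ := by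
      rw [K, K, max_eq_right ha1, max_eq_right (ha1.trans h12.le)]
      refine mul_le_mul_of_nonneg_left ?_ hc.le
      -- change variables `u = s - t` in both integrals
      have hrepr : ∀ t, ∫ s in t..b, (s - a) ^ (α - 1) * (s - t) ^ (α - 1)
          = ∫ u in (0:ℝ)..b - t, (u - 0) ^ (α - 1) * (u - (a - t)) ^ (α - 1) := by
        intro t
        have h := intervalIntegral.integral_comp_sub_right (a := t) (b := b)
          (fun u => (u - 0) ^ (α - 1) * (u - (a - t)) ^ (α - 1)) t
        rw [sub_self] at h
        rw [← h]
        refine intervalIntegral.integral_congr (fun s _ => ?_)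
        have e1 : s - t - 0 = s - t := by ring
        have e2 : s - t - (a - t) = s - a := by ring
        simp only [e1, e2, mul_comm]
      rw [hrepr t₁, hrepr t₂]
      have hb2 : (0:ℝ) < b - t₂ := by linarith
      have hb12 : b - t₂ ≤ b - t₁ := by linarith
      have hi1 : IntervalIntegrable (fun u => (u - 0) ^ (α - 1) * (u - (a - t₁)) ^ (α - 1))
          volume 0 (b - t₂) := prod_intble le_rfl (by linarith) hb2.le hp2
      have hi2 : IntervalIntegrable (fun u => (u - 0) ^ (α - 1) * (u - (a - t₁)) ^ (α - 1))
          volume (b - t₂) (b - t₁) := prod_intble hb2.le (by linarith) hb12 hp2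
      have hsplit := intervalIntegral.integral_add_adjacent_intervals hi1 hi2
      have hnn : 0 ≤ ∫ u in (b - t₂)..(b - t₁),
          (u - 0) ^ (α - 1) * (u - (a - t₁)) ^ (α - 1) := by
        refine intervalIntegral.integral_nonneg hb12 (fun u hu => ?_)
        exact mul_nonneg (Real.rpow_nonneg (by linarith [hu.1]) _)
          (Real.rpow_nonneg (by linarith [hu.1]) _)
      have hlt : ∫ u in (0:ℝ)..b - t₂, (u - 0) ^ (α - 1) * (u - (a - t₂)) ^ (α - 1)
          ≤ ∫ u in (0:ℝ)..b - t₂, (u - 0) ^ (α - 1) * (u - (a - t₁)) ^ (α - 1) :=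
        (integral_lt le_rfl (by linarith : a - t₂ < a - t₁) (by linarith) hb2 hp2 hp0).le
      linarith [hsplit]
    have hq : 0 ≤ K b α x a / K b α a a := div_nonneg hKxa hKaa.le
    rw [G, G, mul_div_assoc, mul_div_assoc]
    have := mul_le_mul_of_nonneg_right hKa hq
    linarith
  -- G(x,a) = 0, hence G(x,x) > 0
  have hGa : G a b α x a = 0 := by
    rw [G, mul_comm, mul_div_assoc, div_self hKaa.ne', mul_one, sub_self]
  have hGxx : 0 < G a b α x x := by
    have := hmono a x le_rfl hax le_rfl
    rw [hGa] at this; exact this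
  have hSM : StrictMonoOn (fun t => G a b α x t) (Set.Ioo a x) :=
    fun t₁ h₁ t₂ h₂ h₁₂ => hmono t₁ t₂ h₁.1.le h₁₂ h₂.2.le
  refine ⟨hSM, ?_, hGxx⟩
  -- boundedness of the image
  have hub : ∀ y ∈ (fun t => G a b α x t) '' Set.Ioo a x, y ≤ G a b α x x := by
    rintro _ ⟨t, ht, rfl⟩
    exact (hmono t x ht.1.le ht.2 le_rfl).le
  have hbdd : BddAbove ((fun t => G a b α x t) '' Set.Ioo a x) := ⟨G a b α x x, hub⟩
  -- the limit of G(x,t) as t → x⁻ is G(x,x)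
  have hTends : Tendsto (fun t => G a b α x t) (𝓝[<] x) (𝓝 (G a b α x x)) := by
    have hα0 : (0:ℝ) < α := by linarith
    have hIoc : Set.uIoc x b = Set.Ioc x b := uIoc_of_le hxb.le
    -- continuity of the integrands on the domain of integration
    have hcont : ∀ c t : ℝ, c ≤ x → t ≤ x →
        ContinuousOn (fun s => (s - c) ^ (α - 1) * (s - t) ^ (α - 1)) (Set.uIoc x b) := by
      intro c t hcx htx s hs
      rw [hIoc] at hs
      have h1 : s - c ≠ 0 := sub_ne_zero.mpr (ne_of_gt (lt_of_le_of_lt hcx hs.1))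
      have h2 : s - t ≠ 0 := sub_ne_zero.mpr (ne_of_gt (lt_of_le_of_lt htx hs.1))
      exact (((continuousAt_id.sub continuousAt_const).rpow_const (Or.inl h1)).mul
        ((continuousAt_id.sub continuousAt_const).rpow_const (Or.inl h2))).continuousWithinAt
    -- dominated convergence for the first integral
    have hT1 : Tendsto (fun t => ∫ s in x..b, (s - x) ^ (α - 1) * (s - t) ^ (α - 1)) (𝓝[<] x)
        (𝓝 (∫ s in x..b, (s - x) ^ (α - 1) * (s - x) ^ (α - 1))) := by
      refine intervalIntegral.tendsto_integral_filter_of_dominated_convergence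
        (fun s => (s - x) ^ (α - 1) * (s - x) ^ (α - 1)) ?_ ?_
        (prod_intble le_rfl le_rfl hxb.le hp2) ?_
      · filter_upwards [self_mem_nhdsWithin] with t ht
        exact (hcont x t le_rfl (le_of_lt ht)).aestronglyMeasurable measurableSet_uIoc
      · filter_upwards [self_mem_nhdsWithin] with t ht
        refine ae_of_all _ (fun s hs => ?_)
        rw [hIoc] at hs
        have htx : t < x := ht
        have hsx : (0:ℝ) < s - x := sub_pos.mpr hs.1
        have h1 : 0 ≤ (s - x) ^ (α - 1) := Real.rpow_nonneg hsx.le _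
        have h2 : 0 ≤ (s - t) ^ (α - 1) := Real.rpow_nonneg (by linarith [hs.1]) _
        rw [Real.norm_eq_abs, abs_of_nonneg (mul_nonneg h1 h2)]
        exact mul_le_mul_of_nonneg_left
          (Real.rpow_le_rpow_of_nonpos hsx (by linarith : s - x ≤ s - t) hp0.le) h1
      · refine ae_of_all _ (fun s hs => ?_)
        rw [hIoc] at hs
        have hsx : s - x ≠ 0 := sub_ne_zero.mpr hs.1.ne'
        exact tendsto_const_nhds.mul
          ((((continuousAt_const.sub continuousAt_id).rpow_const
            (Or.inl hsx)).tendsto).mono_left nhdsWithin_le_nhds)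
    -- dominated convergence for the second integral over `[x,b]`
    have hT2a : Tendsto (fun t => ∫ s in x..b, (s - a) ^ (α - 1) * (s - t) ^ (α - 1)) (𝓝[<] x)
        (𝓝 (∫ s in x..b, (s - a) ^ (α - 1) * (s - x) ^ (α - 1))) := by
      refine intervalIntegral.tendsto_integral_filter_of_dominated_convergence
        (fun s => (s - a) ^ (α - 1) * (s - x) ^ (α - 1)) ?_ ?_
        (prod_intble hax.le le_rfl hxb.le hp2) ?_
      · filter_upwards [self_mem_nhdsWithin] with t ht
        exact (hcont a t hax.le (le_of_lt ht)).aestronglyMeasurable measurableSet_uIoc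
      · filter_upwards [self_mem_nhdsWithin] with t ht
        refine ae_of_all _ (fun s hs => ?_)
        rw [hIoc] at hs
        have htx : t < x := ht
        have hsx : (0:ℝ) < s - x := sub_pos.mpr hs.1
        have h1 : 0 ≤ (s - a) ^ (α - 1) := Real.rpow_nonneg (by linarith [hs.1]) _
        have h2 : 0 ≤ (s - t) ^ (α - 1) := Real.rpow_nonneg (by linarith [hs.1]) _
        rw [Real.norm_eq_abs, abs_of_nonneg (mul_nonneg h1 h2)]
        exact mul_le_mul_of_nonneg_left
          (Real.rpow_le_rpow_of_nonpos hsx (by linarith : s - x ≤ s - t) hp0.le) h1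
      · refine ae_of_all _ (fun s hs => ?_)
        rw [hIoc] at hs
        have hsx : s - x ≠ 0 := sub_ne_zero.mpr hs.1.ne'
        exact tendsto_const_nhds.mul
          ((((continuousAt_const.sub continuousAt_id).rpow_const
            (Or.inl hsx)).tendsto).mono_left nhdsWithin_le_nhds)
    -- the boundary piece `∫ t^x` tends to zero
    have hT2b : Tendsto (fun t => ∫ s in t..x, (s - a) ^ (α - 1) * (s - t) ^ (α - 1)) (𝓝[<] x)
        (𝓝 0) := by
      set m : ℝ := (a + x) / 2 with hm
      have hm1 : a < m := by rw [hm]; linarith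
      have hm2 : m < x := by rw [hm]; linarith
      have hmem : Set.Ioo m x ∈ 𝓝[<] x := Ioo_mem_nhdsLT_of_mem ⟨hm2, le_rfl⟩
      -- upper bound function tends to zero
      have h1 : Tendsto (fun t : ℝ => x - t) (𝓝[<] x) (𝓝 0) := by
        have h : Tendsto (fun t : ℝ => x - t) (𝓝 x) (𝓝 (x - x)) :=
          (continuous_const.sub continuous_id).tendsto x
        rw [sub_self] at h
        exact h.mono_left nhdsWithin_le_nhds
      have h2 : Tendsto (fun t : ℝ => (x - t) ^ α) (𝓝[<] x) (𝓝 0) := by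
        have h := h1.rpow_const (p := α) (Or.inr hα0.le)
        rwa [Real.zero_rpow hα0.ne'] at h
      have h3 : Tendsto (fun t : ℝ => (m - a) ^ (α - 1) * ((x - t) ^ α / α)) (𝓝[<] x)
          (𝓝 0) := by
        have h := (h2.div_const α).const_mul ((m - a) ^ (α - 1))
        simpa using h
      refine tendsto_of_tendsto_of_tendsto_of_le_of_le' tendsto_const_nhds h3 ?_ ?_
      · filter_upwards [hmem] with t ht
        refine intervalIntegral.integral_nonneg ht.2.le (fun s hs => ?_)
        exact mul_nonneg (Real.rpow_nonneg (by linarith [hs.1, hm1, ht.1]) _)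
          (Real.rpow_nonneg (by linarith [hs.1]) _)
      · filter_upwards [hmem] with t ht
        have hta : a < t := hm1.trans ht.1
        have hest : ∫ s in t..x, (s - a) ^ (α - 1) * (s - t) ^ (α - 1)
            ≤ ∫ s in t..x, (m - a) ^ (α - 1) * (s - t) ^ (α - 1) := by
          refine intervalIntegral.integral_mono_on ht.2.le
            (prod_intble hta.le le_rfl ht.2.le hp2)
            ((rpow_shift_intble t hp1 t x).const_mul _) (fun s hs => ?_)
          refine mul_le_mul_of_nonneg_right
            (Real.rpow_le_rpow_of_nonpos (by linarith : (0:ℝ) < m - a)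
              (by linarith [hs.1, ht.1] : m - a ≤ s - a) hp0.le)
            (Real.rpow_nonneg (by linarith [hs.1]) _)
        have hcalc : ∫ s in t..x, (s - t) ^ (α - 1) = (x - t) ^ α / α := by
          have h := intervalIntegral.integral_comp_sub_right (a := t) (b := x)
            (fun u => u ^ (α - 1)) t
          rw [sub_self] at h
          rw [h, integral_rpow (Or.inl hp1), Real.zero_rpow (by ring_nf; exact hα0.ne'),
            sub_zero, show α - 1 + 1 = α by ring]
        calc ∫ s in t..x, (s - a) ^ (α - 1) * (s - t) ^ (α - 1)
            ≤ ∫ s in t..x, (m - a) ^ (α - 1) * (s - t) ^ (α - 1) := hest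
          _ = (m - a) ^ (α - 1) * ((x - t) ^ α / α) := by
              rw [intervalIntegral.integral_const_mul, hcalc]
    -- assemble the limit of the second kernel integral
    have hT2 : Tendsto (fun t => ∫ s in t..b, (s - a) ^ (α - 1) * (s - t) ^ (α - 1)) (𝓝[<] x)
        (𝓝 (∫ s in x..b, (s - a) ^ (α - 1) * (s - x) ^ (α - 1))) := by
      have hsum := hT2b.add hT2a
      rw [zero_add] at hsum
      refine hsum.congr' ?_
      filter_upwards [Ioo_mem_nhdsLT_of_mem (show x ∈ Set.Ioc a x from ⟨hax, le_rfl⟩)]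
        with t ht
      exact intervalIntegral.integral_add_adjacent_intervals
        (prod_intble ht.1.le le_rfl ht.2.le hp2)
        (prod_intble (ht.1.le.trans ht.2.le) ht.2.le hxb.le hp2)
    -- put everything together
    have hGxxval : G a b α x x =
        (1 / Real.Gamma α ^ 2) * (∫ s in x..b, (s - x) ^ (α - 1) * (s - x) ^ (α - 1))
          - ((1 / Real.Gamma α ^ 2) *
              (∫ s in x..b, (s - a) ^ (α - 1) * (s - x) ^ (α - 1))) * K b α x a / K b α a a := by
      simp only [G, K, max_self, max_eq_right hax.le]
    have hfinal : Tendsto (fun t =>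
        (1 / Real.Gamma α ^ 2) * (∫ s in x..b, (s - x) ^ (α - 1) * (s - t) ^ (α - 1))
          - ((1 / Real.Gamma α ^ 2) *
              (∫ s in t..b, (s - a) ^ (α - 1) * (s - t) ^ (α - 1))) * K b α x a / K b α a a)
        (𝓝[<] x) (𝓝 (G a b α x x)) := by
      rw [hGxxval]
      exact (hT1.const_mul _).sub (((hT2.const_mul _).mul_const _).div_const _)
    refine Tendsto.congr' ?_ hfinal
    filter_upwards [Ioo_mem_nhdsLT_of_mem (show x ∈ Set.Ioc a x from ⟨hax, le_rfl⟩)]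
      with t ht
    simp only [G, K, max_eq_left ht.2.le, max_eq_right ht.1.le]
  have hT2 := MonotoneOn.tendsto_nhdsWithin_Ioo_left
    (nonempty_Ioo.mpr hax) hSM.monotoneOn hbdd
  exact tendsto_nhds_unique hT2 hTends
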